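/- Let ν be a nonzero locally finite Borel measure on ℝ such that for every t ∈ ℝ there exists c(t) > 0 with (T_t)_*ν = c(t)·ν. Then ν is equivalent to Lebesgue measure: there is a measurable function ρ : ℝ → (0, ∞) with ν = ρ·m, where m is Lebesgue measure. Moreover ρ can be taken of the form ρ(x) = C·e^{αx} for constants C > 0 and α ∈ ℝ. -/

import Mathlib

open MeasureTheory Set Filter

lemma exists_Ioc_pos (ν : Measure ℝ) (hν : ν ≠ 0) :
    ∃ a b : ℝ, a < b ∧ 0 < ν (Set.Ioc a b) := by
  by_contra h
  push_neg at h
  have hz : ∀ n : ℕ, ν (Set.Ioc (-(n : ℝ) - 1) ((n : ℝ) + 1)) = 0 := by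
    intro n
    have hlt : (-(n : ℝ) - 1) < (n : ℝ) + 1 := by have hn : (0:ℝ) ≤ n := Nat.cast_nonneg n; linarith
    exact le_antisymm (h _ _ hlt) zero_le
  have hcov : (Set.univ : Set ℝ) ⊆ ⋃ n : ℕ, Set.Ioc (-(n : ℝ) - 1) ((n : ℝ) + 1) := by
    intro x _
    refine Set.mem_iUnion.2 ⟨⌈|x|⌉₊, ?_, ?_⟩
    · have := Nat.le_ceil |x|
      nlinarith [abs_nonneg x, neg_abs_le x, le_abs_self x]
    · have := Nat.le_ceil |x|
      nlinarith [le_abs_self x]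
  have : ν Set.univ = 0 := by
    refine le_antisymm ((measure_mono hcov).trans ?_) zero_le
    calc ν (⋃ n : ℕ, Set.Ioc (-(n : ℝ) - 1) ((n : ℝ) + 1))
        ≤ ∑' n : ℕ, ν (Set.Ioc (-(n : ℝ) - 1) ((n : ℝ) + 1)) := measure_iUnion_le _
      _ = 0 := by simp [hz]
  exact hν (Measure.measure_univ_eq_zero.1 this)

section Bump
variable {a b : ℝ}

noncomputable def bump (a b : ℝ) : ℝ → ℝ := fun x => max (1 - Metric.infDist x (Set.Icc a b)) 0

lemma bump_continuous : Continuous (bump a b) :=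
  (continuous_const.sub (Metric.continuous_infDist_pt _)).max continuous_const

lemma bump_nonneg (x : ℝ) : 0 ≤ bump a b x := le_max_right _ _

lemma bump_le_one (x : ℝ) : bump a b x ≤ 1 :=
  max_le (by simp [Metric.infDist_nonneg]) zero_le_one

lemma bump_eq_one (hab : a ≤ b) {x : ℝ} (hx : x ∈ Set.Icc a b) : bump a b x = 1 := by
  simp [bump, Metric.infDist_zero_of_mem hx]

lemma bump_eq_zero (hab : a ≤ b) {x : ℝ} (hx : x ∉ Set.Icc (a - 1) (b + 1)) :
    bump a b x = 0 := by
  have hne : (Set.Icc a b).Nonempty := Set.nonempty_Icc.2 hab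
  have h1 : 1 ≤ Metric.infDist x (Set.Icc a b) := by
    by_contra hlt
    push_neg at hlt
    obtain ⟨y, hy, hd⟩ := (Metric.infDist_lt_iff hne).1 hlt
    rcases Set.mem_Icc.1 hy with ⟨hy1, hy2⟩
    rw [Set.mem_Icc, not_and_or] at hx
    rw [Real.dist_eq, abs_lt] at hd
    rcases hx with hx | hx <;> push_neg at hx <;> linarith
  simp only [bump, max_eq_right_iff]
  linarith

lemma bump_hasCompactSupport (hab : a ≤ b) : HasCompactSupport (bump a b) :=
  HasCompactSupport.intro isCompact_Icc (fun _ hx => bump_eq_zero hab hx)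

end Bump

lemma bump_shift_integrable (ν : Measure ℝ) [IsLocallyFiniteMeasure ν] {a b : ℝ} (hab : a ≤ b)
    (t : ℝ) : Integrable (fun x => bump a b (x + t)) ν := by
  have hc : Continuous fun x => bump a b (x + t) :=
    bump_continuous.comp (continuous_id.add continuous_const)
  have hcs : HasCompactSupport fun x => bump a b (x + t) :=
    (bump_hasCompactSupport hab).comp_homeomorph (Homeomorph.addRight t)
  exact hc.integrable_of_hasCompactSupport hcs

lemma continuous_bump_shift_integral (ν : Measure ℝ) [IsLocallyFiniteMeasure ν] {a b : ℝ}
    (hab : a ≤ b) : Continuous fun t => ∫ x, bump a b (x + t) ∂ν := by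
  rw [continuous_iff_continuousAt]
  intro t₀
  set K : Set ℝ := Set.Icc (a - 2 - t₀) (b + 2 - t₀) with hK
  have hKc : IsCompact K := isCompact_Icc
  haveI : IsFiniteMeasure (ν.restrict K) :=
    ⟨by rw [Measure.restrict_apply_univ]; exact hKc.measure_lt_top⟩
  have heq : ∀ t ∈ Metric.ball t₀ 1, ∫ x, bump a b (x + t) ∂ν = ∫ x in K, bump a b (x + t) ∂ν := by
    intro t ht
    rw [Real.ball_eq_Ioo] at ht
    rcases ht with ⟨ht1, ht2⟩
    refine (setIntegral_eq_integral_of_forall_compl_eq_zero fun x hx => ?_).symm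
    apply bump_eq_zero hab
    rw [Set.mem_Icc, not_and_or] at hx ⊢
    rcases hx with hx | hx <;> push_neg at hx <;> [left; right] <;> push_neg <;> linarith
  have hcont : ContinuousAt (fun t => ∫ x in K, bump a b (x + t) ∂ν) t₀ := by
    apply continuousAt_of_dominated (bound := fun _ => (1 : ℝ))
    · exact Eventually.of_forall fun t =>
        (bump_continuous.comp (continuous_id.add continuous_const)).aestronglyMeasurable
    · exact Eventually.of_forall fun t => Eventually.of_forall fun x => by
        rw [Real.norm_eq_abs, abs_of_nonneg (bump_nonneg _)]; exact bump_le_one _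
    · exact integrable_const 1
    · exact Eventually.of_forall fun x =>
        (bump_continuous.comp (continuous_const.add continuous_id)).continuousAt
  exact hcont.congr (Filter.eventuallyEq_of_mem (Metric.ball_mem_nhds t₀ one_pos) heq).symm

open MeasureTheory Set Filter
open scoped ENNReal NNReal

/-- If every translate of a nonzero locally finite measure `ν` on `ℝ` is proportional to `ν`,
then `ν` is equivalent to Lebesgue measure, with density of the form `C e^{αx}`. -/
theorem statement5 (ν : Measure ℝ) [IsLocallyFiniteMeasure ν] (hν : ν ≠ 0)
    (hprop : ∀ t : ℝ, ∃ c : NNReal, 0 < c ∧ Measure.map (fun x => x + t) ν = c • ν) :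
    (ν ≪ volume ∧ volume ≪ ν) ∧
    ∃ C : ℝ, 0 < C ∧ ∃ α : ℝ,
      ν = volume.withDensity fun x => ENNReal.ofReal (C * Real.exp (α * x)) := by
  obtain ⟨a, b, hab, hpos⟩ := exists_Ioc_pos ν hν
  have hfin : ν (Set.Ioc a b) < ⊤ := measure_Ioc_lt_top
  choose c hc hmap using hprop
  -- multiplicativity of c
  have hmul : ∀ s t : ℝ, c (s + t) = c s * c t := by
    intro s t
    have hcomp : (fun x : ℝ => x + (s + t)) = (fun x => x + t) ∘ (fun x => x + s) := by
      funext x; simp [Function.comp, add_assoc]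
    have h1 : Measure.map (fun x : ℝ => x + (s + t)) ν = (c s * c t) • ν := by
      rw [hcomp, ← Measure.map_map (measurable_add_const t) (measurable_add_const s), hmap s,
        Measure.map_smul, hmap t, smul_smul, mul_comm]
    have h2 := (hmap (s + t)).symm.trans h1
    have h3 : (c (s + t) : ℝ≥0∞) * ν (Set.Ioc a b)
        = ((c s * c t : ℝ≥0) : ℝ≥0∞) * ν (Set.Ioc a b) := by
      have := congrArg (fun m : Measure ℝ => m (Set.Ioc a b)) h2
      simpa [Measure.smul_apply, smul_eq_mul] using this
    have h4 : (c (s + t) : ℝ≥0∞) = ((c s * c t : ℝ≥0) : ℝ≥0∞) := by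
      rw [mul_comm _ (ν (Set.Ioc a b)), mul_comm _ (ν (Set.Ioc a b))] at h3
      exact (ENNReal.mul_right_inj hpos.ne' hfin.ne).1 h3
    exact_mod_cast h4
  -- the integral function
  have hIt : ∀ t, (∫ x, bump a b (x + t) ∂ν) = (c t : ℝ) * ∫ x, bump a b x ∂ν := by
    intro t
    have h1 : ∫ x, bump a b x ∂(Measure.map (fun x => x + t) ν) = ∫ x, bump a b (x + t) ∂ν :=
      integral_map (measurable_add_const t).aemeasurable bump_continuous.aestronglyMeasurable
    have h2 : ∫ x, bump a b x ∂(Measure.map (fun x => x + t) ν)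
        = (c t : ℝ) * ∫ x, bump a b x ∂ν := by
      rw [hmap t, integral_smul_nnreal_measure, NNReal.smul_def, smul_eq_mul]
    rw [← h1, h2]
  have hI0 : 0 < ∫ x, bump a b x ∂ν := by
    have hint : Integrable (bump a b) ν := by
      simpa using bump_shift_integrable ν hab.le 0
    have h4 : ∫ x in Set.Ioc a b, bump a b x ∂ν = (ν (Set.Ioc a b)).toReal := by
      rw [setIntegral_congr_fun measurableSet_Ioc
        (g := fun _ => (1 : ℝ)) fun x hx => bump_eq_one hab.le (Set.Ioc_subset_Icc_self hx)]
      simp [setIntegral_const]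
      rfl
    have h5 : ∫ x in Set.Ioc a b, bump a b x ∂ν ≤ ∫ x, bump a b x ∂ν :=
      setIntegral_le_integral hint (Eventually.of_forall fun x => bump_nonneg x)
    have h6 : 0 < (ν (Set.Ioc a b)).toReal := ENNReal.toReal_pos hpos.ne' hfin.ne
    calc (0:ℝ) < (ν (Set.Ioc a b)).toReal := h6
      _ = ∫ x in Set.Ioc a b, bump a b x ∂ν := h4.symm
      _ ≤ _ := h5
  have hccont : Continuous fun t => (c t : ℝ) := by
    have heq : (fun t => (c t : ℝ)) = fun t => (∫ x, bump a b (x + t) ∂ν) / ∫ x, bump a b x ∂ν := by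
      funext t; rw [hIt t]; field_simp
    rw [heq]
    exact (continuous_bump_shift_integral ν hab.le).div_const _
  -- Cauchy functional equation
  have hcpos : ∀ t, (0 : ℝ) < (c t : ℝ) := fun t => hc t
  set φ : ℝ →+ ℝ := AddMonoidHom.mk' (fun t => Real.log (c t)) (by
    intro s t
    beta_reduce
    rw [hmul s t, NNReal.coe_mul, Real.log_mul (hcpos s).ne' (hcpos t).ne']) with hφ
  have hφcont : Continuous φ := hccont.log fun t => (hcpos t).ne'
  set β := Real.log (c 1) with hβdef
  have hβ : ∀ t, (c t : ℝ) = Real.exp (β * t) := by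
    intro t
    have h := map_real_smul φ hφcont t 1
    simp only [smul_eq_mul, mul_one] at h
    have hlog : Real.log (c t) = t * β := by
      simpa [hφ, AddMonoidHom.mk'_apply] using h
    rw [← Real.exp_log (hcpos t), hlog, mul_comm]
  have hcE : ∀ t, (c t : ℝ≥0∞) = ENNReal.ofReal (Real.exp (β * t)) := fun t => by
    rw [← hβ t, ENNReal.ofReal_coe_nnreal]
  -- the invariant measure μ
  set g : ℝ → ℝ≥0∞ := fun x => ENNReal.ofReal (Real.exp (β * x)) with hgdef
  have hgm : Measurable g :=
    (Real.continuous_exp.comp (continuous_const.mul continuous_id)).measurable.ennreal_ofReal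
  set μ : Measure ℝ := ν.withDensity g with hμdef
  have hinv : ∀ t, Measure.map (fun x => x + t) μ = μ := by
    intro t
    refine Measure.ext fun s hs => ?_
    rw [Measure.map_apply (measurable_add_const t) hs, hμdef,
      withDensity_apply _ ((measurable_add_const t) hs), withDensity_apply _ hs]
    set G : ℝ → ℝ≥0∞ := s.indicator (fun y => g (y - t)) with hGdef
    have hGm : Measurable G := (hgm.comp (measurable_sub_const t)).indicator hs
    have hkey : ∀ x, ((fun x => x + t) ⁻¹' s).indicator g x = G (x + t) := by
      intro x
      by_cases hx : x + t ∈ s <;>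
        simp [hGdef, Set.indicator, Set.mem_preimage, hx, add_sub_cancel_right]
    have hshift : ∀ y, g (y - t) = ENNReal.ofReal (Real.exp (-(β * t))) * g y := by
      intro y
      rw [hgdef]
      simp only
      rw [← ENNReal.ofReal_mul (Real.exp_pos _).le, ← Real.exp_add]
      ring_nf
    calc ∫⁻ x in (fun x => x + t) ⁻¹' s, g x ∂ν
        = ∫⁻ x, G (x + t) ∂ν := by
          rw [← lintegral_indicator ((measurable_add_const t) hs)]
          exact lintegral_congr hkey
      _ = ∫⁻ y, G y ∂(Measure.map (fun x => x + t) ν) :=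
          (lintegral_map hGm (measurable_add_const t)).symm
      _ = (c t : ℝ≥0∞) * ∫⁻ y, G y ∂ν := by
          rw [hmap t, ENNReal.smul_def, lintegral_smul_measure, smul_eq_mul]
      _ = (c t : ℝ≥0∞) * ∫⁻ y in s, g (y - t) ∂ν := by
          rw [lintegral_indicator hs]
      _ = (c t : ℝ≥0∞) * (ENNReal.ofReal (Real.exp (-(β * t))) * ∫⁻ y in s, g y ∂ν) := by
          congr 1
          rw [← lintegral_const_mul' _ _ ENNReal.ofReal_ne_top]
          exact lintegral_congr fun y => hshift y
      _ = ∫⁻ y in s, g y ∂ν := by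
          rw [hcE t, ← mul_assoc, ← ENNReal.ofReal_mul (Real.exp_pos _).le, ← Real.exp_add,
            add_neg_cancel, Real.exp_zero, ENNReal.ofReal_one, one_mul]
  haveI hinv' : Measure.IsAddLeftInvariant μ := by
    constructor
    intro t
    have : (fun x => t + x) = fun x => x + t := by funext x; ring
    rw [this]
    exact hinv t
  haveI hfc : IsFiniteMeasureOnCompacts μ := by
    constructor
    intro K hK
    obtain ⟨r, hr⟩ := hK.isBounded.subset_closedBall 0
    have hsub : K ⊆ Set.Icc (-r) r := by
      intro x hx
      have := hr hx
      rw [Metric.mem_closedBall, Real.dist_eq, sub_zero, abs_le] at this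
      exact this
    have hb : ∀ x ∈ K, g x ≤ ENNReal.ofReal (Real.exp (|β| * |r|)) := by
      intro x hx
      rcases Set.mem_Icc.1 (hsub hx) with ⟨h1, h2⟩
      apply ENNReal.ofReal_le_ofReal
      apply Real.exp_le_exp.2
      calc β * x ≤ |β * x| := le_abs_self _
        _ = |β| * |x| := abs_mul _ _
        _ ≤ |β| * |r| := by
            apply mul_le_mul_of_nonneg_left _ (abs_nonneg _)
            rw [abs_le]
            constructor <;> [skip; skip] <;> nlinarith [le_abs_self r, neg_abs_le r]
    calc μ K = ∫⁻ x in K, g x ∂ν := withDensity_apply _ hK.measurableSet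
      _ ≤ ∫⁻ _ in K, ENNReal.ofReal (Real.exp (|β| * |r|)) ∂ν :=
          setLIntegral_mono' hK.measurableSet hb
      _ = ENNReal.ofReal (Real.exp (|β| * |r|)) * ν K := by rw [setLIntegral_const]
      _ < ⊤ := ENNReal.mul_lt_top ENNReal.ofReal_lt_top hK.measure_lt_top
  -- μ is a multiple of Lebesgue
  have hscal : μ = Measure.addHaarScalarFactor μ (volume : Measure ℝ) • (volume : Measure ℝ) :=
    Measure.isAddLeftInvariant_eq_smul μ volume
  set k : NNReal := Measure.addHaarScalarFactor μ (volume : Measure ℝ) with hkdef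
  -- recover ν from μ
  set g' : ℝ → ℝ≥0∞ := fun x => ENNReal.ofReal (Real.exp (-β * x)) with hg'def
  have hg'm : Measurable g' :=
    (Real.continuous_exp.comp (continuous_const.mul continuous_id)).measurable.ennreal_ofReal
  have hgg' : (g * g') = fun _ => (1 : ℝ≥0∞) := by
    funext x
    rw [Pi.mul_apply, hgdef, hg'def]
    simp only
    rw [← ENNReal.ofReal_mul (Real.exp_pos _).le, ← Real.exp_add]
    norm_num
  have hν2 : ν = μ.withDensity g' := by
    calc ν = ν.withDensity (g * g') := by
          rw [hgg']
          exact withDensity_one.symm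
      _ = (ν.withDensity g).withDensity g' := withDensity_mul ν hgm hg'm
      _ = μ.withDensity g' := by rw [hμdef]
  have hν3 : ν = volume.withDensity fun x => (k : ℝ≥0∞) * g' x := by
    calc ν = μ.withDensity g' := hν2
      _ = (k • (volume : Measure ℝ)).withDensity g' := by rw [← hscal]
      _ = ((k : ℝ≥0∞) • (volume : Measure ℝ)).withDensity g' := by rw [ENNReal.smul_def]
      _ = (k : ℝ≥0∞) • (volume.withDensity g') := withDensity_smul_measure _ _
      _ = volume.withDensity ((k : ℝ≥0∞) • g') := (withDensity_smul _ hg'm).symm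
      _ = volume.withDensity fun x => (k : ℝ≥0∞) * g' x := rfl
  have hk0 : k ≠ 0 := by
    intro h
    apply hν
    rw [hν3, h]
    simp
  have hdens : (fun x => ENNReal.ofReal ((k : ℝ) * Real.exp (-β * x)))
      = fun x => (k : ℝ≥0∞) * g' x := by
    funext x
    rw [ENNReal.ofReal_mul k.coe_nonneg, ENNReal.ofReal_coe_nnreal]
  have hνfinal : ν = volume.withDensity fun x => ENNReal.ofReal ((k : ℝ) * Real.exp (-β * x)) := by
    rw [hdens]; exact hν3
  refine ⟨⟨?_, ?_⟩, (k : ℝ), NNReal.coe_pos.mpr (zero_lt_iff.mpr hk0), -β, hνfinal⟩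
  · rw [hν3]; exact withDensity_absolutelyContinuous volume _
  · refine Measure.AbsolutelyContinuous.mk fun s hs hνs => ?_
    rw [hν3, withDensity_apply _ hs] at hνs
    have hm : Measurable fun x => (k : ℝ≥0∞) * g' x := hg'm.const_mul _
    rw [setLIntegral_eq_zero_iff hs hm] at hνs
    have hne : ∀ x : ℝ, (k : ℝ≥0∞) * g' x ≠ 0 := by
      intro x
      apply mul_ne_zero
      · exact_mod_cast hk0
      · rw [hg'def]
        simp [ENNReal.ofReal_eq_zero, not_le, Real.exp_pos]
    rw [ae_iff] at hνs
    have huniv : {x : ℝ | ¬ (x ∈ s → (k : ℝ≥0∞) * g' x = 0)} = s := by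
      ext x
      simp only [Set.mem_setOf_eq, Classical.not_imp]
      exact ⟨fun h => h.1, fun h => ⟨h, hne x⟩⟩
    rw [huniv] at hνs
    exact hνs
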